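/- Let γ>0, γ≠1, let u(x)=x^{1−γ}, and let Z be a positive random variable with E[u(Z)] < ∞ on a probability space with sub-σ-algebra 𝒢. Suppose there exist η>0 and a positive function v with E[u(Z)·v' | 𝒢] = η v (a conditional eigenvalue relation, where v' is the next-period value of v). Define M = η^{−1} u(Z) v'/v. Then M > 0 and E[M | 𝒢] = 1, so M is a valid conditional Radon–Nikodym density; moreover for any positive f, u^{−1}(E[u(Z f')|𝒢]) = δ u^{−1}(v) u^{−1}(Ẽ[u(f'/u^{−1}(v'))|𝒢]), where δ = η^{1/(1−γ)} and Ẽ denotes expectation under the measure with density M. -/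

import Mathlib

open MeasureTheory Filter

/-- For nonnegative integrable `X` whose conditional expectation `g = μ[X|𝒢]` is a.e.
positive, the ratio `g⁻¹ * X` is integrable (with integral at most 1), proved by
truncation and monotone convergence. -/
lemma integrable_inv_condexp_mul {Ω : Type*} {m0 : MeasurableSpace Ω} (μ : Measure Ω)
    [IsProbabilityMeasure μ] (𝒢 : MeasurableSpace Ω) (h𝒢 : 𝒢 ≤ m0)
    {X : Ω → ℝ} (hX : Integrable X μ) (hXnn : 0 ≤ᵐ[μ] X)
    (hgpos : ∀ᵐ ω ∂μ, 0 < (μ[X|𝒢]) ω) :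
    Integrable (fun ω => ((μ[X|𝒢]) ω)⁻¹ * X ω) μ := by
  set g : Ω → ℝ := μ[X|𝒢] with hgdef
  have hgm : Measurable[𝒢] g := stronglyMeasurable_condExp.measurable
  have hgm0 : Measurable[m0] g := (stronglyMeasurable_condExp.mono h𝒢).measurable
  -- truncations
  set h : ℕ → Ω → ℝ := fun n ω => max 0 (min (g ω)⁻¹ n) with hhdef
  have hmeas : ∀ n, StronglyMeasurable[𝒢] (h n) := fun n =>
    (measurable_const.max (hgm.inv.min measurable_const)).stronglyMeasurable
  have h_nn : ∀ n ω, 0 ≤ h n ω := fun n ω => le_max_left _ _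
  have h_le : ∀ n ω, h n ω ≤ n := fun n ω =>
    max_le (Nat.cast_nonneg n) (min_le_right _ _)
  have h_le_inv : ∀ n ω, 0 < g ω → h n ω ≤ (g ω)⁻¹ := by
    intro n ω hg
    exact max_le (inv_nonneg.2 hg.le) (min_le_left _ _)
  have hIn : ∀ n, Integrable (fun ω => h n ω * X ω) μ := by
    intro n
    refine hX.bdd_mul ((hmeas n).mono h𝒢).aestronglyMeasurable (c := n) (Eventually.of_forall fun ω => ?_)
    rw [Real.norm_eq_abs, abs_of_nonneg (h_nn n ω)]
    exact h_le n ω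
  have hpull : ∀ n, μ[fun ω => h n ω * X ω|𝒢] =ᵐ[μ] fun ω => h n ω * g ω := fun n =>
    condExp_mul_of_stronglyMeasurable_left (hmeas n) (hIn n) hX
  have hprod_le_one : ∀ n, ∀ᵐ ω ∂μ, h n ω * g ω ≤ 1 := by
    intro n
    filter_upwards [hgpos] with ω hg
    calc h n ω * g ω ≤ (g ω)⁻¹ * g ω :=
          mul_le_mul_of_nonneg_right (h_le_inv n ω hg) hg.le
      _ = 1 := inv_mul_cancel₀ hg.ne'
  have hIbound : ∀ n, ∫ ω, h n ω * X ω ∂μ ≤ 1 := by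
    intro n
    have hintg : Integrable (fun ω => h n ω * g ω) μ := by
      refine integrable_condExp.bdd_mul ((hmeas n).mono h𝒢).aestronglyMeasurable
        (c := n) (Eventually.of_forall fun ω => ?_)
      rw [Real.norm_eq_abs, abs_of_nonneg (h_nn n ω)]
      exact h_le n ω
    calc ∫ ω, h n ω * X ω ∂μ = ∫ ω, (μ[fun ω => h n ω * X ω|𝒢]) ω ∂μ :=
          (integral_condExp h𝒢).symm
      _ = ∫ ω, h n ω * g ω ∂μ := integral_congr_ae (hpull n)
      _ ≤ ∫ _, (1 : ℝ) ∂μ := integral_mono_ae hintg (integrable_const 1) (hprod_le_one n)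
      _ = 1 := by simp
  -- monotone convergence
  set φ : ℕ → Ω → ENNReal := fun n ω => ENNReal.ofReal (h n ω * X ω) with hφdef
  have hmono : ∀ᵐ ω ∂μ, Monotone fun n => φ n ω := by
    filter_upwards [hXnn] with ω hXω
    intro a b hab
    refine ENNReal.ofReal_le_ofReal (mul_le_mul_of_nonneg_right ?_ hXω)
    exact max_le_max le_rfl (min_le_min le_rfl (Nat.cast_le.2 hab))
  have hsup : ∀ᵐ ω ∂μ, (⨆ n, φ n ω) = ENNReal.ofReal ((g ω)⁻¹ * X ω) := by
    filter_upwards [hgpos, hXnn] with ω hg hXω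
    refine le_antisymm (iSup_le fun n => ENNReal.ofReal_le_ofReal
      (mul_le_mul_of_nonneg_right (h_le_inv n ω hg) hXω)) ?_
    obtain ⟨n, hn⟩ := exists_nat_ge (g ω)⁻¹
    have hhn : h n ω = (g ω)⁻¹ := by
      simp only [hhdef]
      rw [min_eq_left hn, max_eq_right (inv_nonneg.2 hg.le)]
    have hval : ENNReal.ofReal ((g ω)⁻¹ * X ω) = φ n ω := by
      simp only [hφdef, hhn]
    rw [hval]
    exact le_iSup (fun n => φ n ω) n
  have hφmeas : ∀ n, AEMeasurable (φ n) μ := by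
    intro n
    exact (ENNReal.measurable_ofReal.comp_aemeasurable
      ((((hmeas n).mono h𝒢).measurable).aemeasurable.mul hX.1.aemeasurable))
  have hlin : ∀ n, ∫⁻ ω, φ n ω ∂μ = ENNReal.ofReal (∫ ω, h n ω * X ω ∂μ) := by
    intro n
    refine (ofReal_integral_eq_lintegral_ofReal (hIn n) ?_).symm
    filter_upwards [hXnn] with ω hXω
    exact mul_nonneg (h_nn n ω) hXω
  have hmeasF : AEStronglyMeasurable[m0] (fun ω => (g ω)⁻¹ * X ω) μ :=
    (hgm0.inv.aemeasurable.mul hX.1.aemeasurable).aestronglyMeasurable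
  refine ⟨hmeasF, ?_⟩
  rw [hasFiniteIntegral_iff_norm]
  have key : ∫⁻ ω, ENNReal.ofReal ‖(g ω)⁻¹ * X ω‖ ∂μ ≤ 1 := by
    have h1 : ∫⁻ ω, ENNReal.ofReal ‖(g ω)⁻¹ * X ω‖ ∂μ
        = ∫⁻ ω, ENNReal.ofReal ((g ω)⁻¹ * X ω) ∂μ := by
      refine lintegral_congr_ae ?_
      filter_upwards [hgpos, hXnn] with ω hg hXω
      rw [Real.norm_eq_abs, abs_of_nonneg (mul_nonneg (inv_nonneg.2 hg.le) hXω)]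
    have h2 : ∫⁻ ω, ENNReal.ofReal ((g ω)⁻¹ * X ω) ∂μ = ∫⁻ ω, ⨆ n, φ n ω ∂μ :=
      (lintegral_congr_ae hsup).symm
    have h3 : ∫⁻ ω, ⨆ n, φ n ω ∂μ = ⨆ n, ∫⁻ ω, φ n ω ∂μ := lintegral_iSup' hφmeas hmono
    rw [h1, h2, h3]
    refine iSup_le fun n => ?_
    rw [hlin n]
    calc ENNReal.ofReal (∫ ω, h n ω * X ω ∂μ) ≤ ENNReal.ofReal 1 :=
          ENNReal.ofReal_le_ofReal (hIbound n)
      _ = 1 := ENNReal.ofReal_one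
  exact lt_of_le_of_lt key ENNReal.one_lt_top

/-- Change-of-measure identity for the recursive utility analysis: given the conditional
eigenvalue relation `E[u(Z) v' | 𝒢] = η v` with `u(x) = x^(1-γ)`, the quantity
`M = η⁻¹ u(Z) v'/v` is a positive conditional density (`M > 0`, `E[M|𝒢] = 1`),
and for every positive `f'`,
`u⁻¹(E[u(Z f')|𝒢]) = δ u⁻¹(v) u⁻¹(Ẽ[u(f'/u⁻¹(v'))|𝒢])`, where `δ = η^(1/(1-γ))`
and the tilted conditional expectation is `Ẽ[X|𝒢] = E[M X|𝒢]`. -/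
theorem stmt17 {Ω : Type*} {m0 : MeasurableSpace Ω} (μ : Measure Ω)
    [IsProbabilityMeasure μ] (𝒢 : MeasurableSpace Ω) (h𝒢 : 𝒢 ≤ m0)
    (γ η : ℝ) (hγ0 : 0 < γ) (hγ1 : γ ≠ 1) (hη : 0 < η)
    (Z v v' : Ω → ℝ) (hZ : ∀ ω, 0 < Z ω) (hv : ∀ ω, 0 < v ω) (hv' : ∀ ω, 0 < v' ω)
    (hint : Integrable (fun ω => Z ω ^ (1 - γ) * v' ω) μ)
    (heig : μ[fun ω => Z ω ^ (1 - γ) * v' ω | 𝒢] =ᵐ[μ] fun ω => η * v ω) :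
    (∀ ω, 0 < η⁻¹ * Z ω ^ (1 - γ) * v' ω / v ω) ∧
    (μ[fun ω => η⁻¹ * Z ω ^ (1 - γ) * v' ω / v ω | 𝒢] =ᵐ[μ] fun _ => (1 : ℝ)) ∧
    ∀ f' : Ω → ℝ, (∀ ω, 0 < f' ω) →
      Integrable (fun ω => (Z ω * f' ω) ^ (1 - γ)) μ →
      Integrable (fun ω =>
        (η⁻¹ * Z ω ^ (1 - γ) * v' ω / v ω) * (f' ω / v' ω ^ (1 / (1 - γ))) ^ (1 - γ)) μ →
      (fun ω => ((μ[fun ω' => (Z ω' * f' ω') ^ (1 - γ) | 𝒢]) ω) ^ (1 / (1 - γ)))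
        =ᵐ[μ] fun ω => η ^ (1 / (1 - γ)) * v ω ^ (1 / (1 - γ)) *
          ((μ[fun ω' => (η⁻¹ * Z ω' ^ (1 - γ) * v' ω' / v ω') *
              (f' ω' / v' ω' ^ (1 / (1 - γ))) ^ (1 - γ) | 𝒢]) ω) ^ (1 / (1 - γ)) := by
  have hβ : (1 : ℝ) - γ ≠ 0 := sub_ne_zero.2 (Ne.symm hγ1)
  set X : Ω → ℝ := fun ω => Z ω ^ (1 - γ) * v' ω with hXdef
  set g : Ω → ℝ := μ[X|𝒢] with hgdef
  have hXpos : ∀ ω, 0 < X ω := fun ω =>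
    mul_pos (Real.rpow_pos_of_pos (hZ ω) _) (hv' ω)
  have hgpos : ∀ᵐ ω ∂μ, 0 < g ω := by
    filter_upwards [heig] with ω hω
    rw [hω]
    exact mul_pos hη (hv ω)
  have hginvm : StronglyMeasurable[𝒢] (fun ω => (g ω)⁻¹) :=
    stronglyMeasurable_condExp.measurable.inv.stronglyMeasurable
  have hMeq : ∀ ω, η⁻¹ * Z ω ^ (1 - γ) * v' ω / v ω = (η * v ω)⁻¹ * X ω := by
    intro ω
    rw [hXdef, mul_inv]
    field_simp
  have hMae : (fun ω => η⁻¹ * Z ω ^ (1 - γ) * v' ω / v ω)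
      =ᵐ[μ] fun ω => (g ω)⁻¹ * X ω := by
    filter_upwards [heig] with ω hω
    rw [hMeq ω, hω]
  have hFint : Integrable (fun ω => (g ω)⁻¹ * X ω) μ :=
    integrable_inv_condexp_mul μ 𝒢 h𝒢 hint
      (Eventually.of_forall fun ω => (hXpos ω).le) hgpos
  refine ⟨?_, ?_, ?_⟩
  · intro ω
    exact div_pos (mul_pos (mul_pos (inv_pos.2 hη)
      (Real.rpow_pos_of_pos (hZ ω) _)) (hv' ω)) (hv ω)
  · calc μ[fun ω => η⁻¹ * Z ω ^ (1 - γ) * v' ω / v ω|𝒢]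
        =ᵐ[μ] μ[fun ω => (g ω)⁻¹ * X ω|𝒢] := condExp_congr_ae hMae
      _ =ᵐ[μ] fun ω => (g ω)⁻¹ * g ω :=
          condExp_mul_of_stronglyMeasurable_left hginvm hFint hint
      _ =ᵐ[μ] fun _ => (1 : ℝ) := by
          filter_upwards [hgpos] with ω hg
          exact inv_mul_cancel₀ hg.ne'
  · intro f' hf' hint2 hint3
    set Y : Ω → ℝ := fun ω => (Z ω * f' ω) ^ (1 - γ) with hYdef
    have hKeq : ∀ ω, (η⁻¹ * Z ω ^ (1 - γ) * v' ω / v ω) *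
        (f' ω / v' ω ^ (1 / (1 - γ))) ^ (1 - γ) = (η * v ω)⁻¹ * Y ω := by
      intro ω
      have h1 : (v' ω ^ (1 / (1 - γ))) ^ (1 - γ) = v' ω := by
        rw [← Real.rpow_mul (hv' ω).le, one_div_mul_cancel hβ, Real.rpow_one]
      have h2 : (f' ω / v' ω ^ (1 / (1 - γ))) ^ (1 - γ)
          = f' ω ^ (1 - γ) / v' ω := by
        rw [Real.div_rpow (hf' ω).le (Real.rpow_pos_of_pos (hv' ω) _).le, h1]
      have h3 : Y ω = Z ω ^ (1 - γ) * f' ω ^ (1 - γ) := by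
        rw [hYdef]
        exact Real.mul_rpow (hZ ω).le (hf' ω).le
      rw [h2, h3, mul_inv]
      have hvne := (hv ω).ne'
      have hv'ne := (hv' ω).ne'
      have hηne := hη.ne'
      field_simp
    have hKae : (fun ω => (η⁻¹ * Z ω ^ (1 - γ) * v' ω / v ω) *
        (f' ω / v' ω ^ (1 / (1 - γ))) ^ (1 - γ)) =ᵐ[μ] fun ω => (g ω)⁻¹ * Y ω := by
      filter_upwards [heig] with ω hω
      rw [hKeq ω, hω]
    have hGint : Integrable (fun ω => (g ω)⁻¹ * Y ω) μ := hint3.congr hKae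
    have hpull : μ[fun ω' => (η⁻¹ * Z ω' ^ (1 - γ) * v' ω' / v ω') *
          (f' ω' / v' ω' ^ (1 / (1 - γ))) ^ (1 - γ)|𝒢]
        =ᵐ[μ] fun ω => (g ω)⁻¹ * (μ[Y|𝒢]) ω :=
      (condExp_congr_ae hKae).trans
        (condExp_mul_of_stronglyMeasurable_left hginvm hGint hint2)
    have hcY : 0 ≤ᵐ[μ] μ[Y|𝒢] :=
      condExp_nonneg (Eventually.of_forall fun ω =>
        (Real.rpow_pos_of_pos (mul_pos (hZ ω) (hf' ω)) _).le)
    filter_upwards [hpull, heig, hcY] with ω h1 h2 h3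
    have hgω : g ω = η * v ω := h2
    rw [h1, hgω]
    have hηv : (0 : ℝ) < η * v ω := mul_pos hη (hv ω)
    rw [Real.mul_rpow (inv_nonneg.2 hηv.le) h3, Real.inv_rpow hηv.le,
      Real.mul_rpow hη.le (hv ω).le]
    have hpos : (0 : ℝ) < η ^ (1 / (1 - γ)) * v ω ^ (1 / (1 - γ)) :=
      mul_pos (Real.rpow_pos_of_pos hη _) (Real.rpow_pos_of_pos (hv ω) _)
    field_simp
    rw [mul_div_assoc, div_self (Real.rpow_pos_of_pos (hv ω) _).ne', mul_one]
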